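/- Let ξ be an m-th root of unity with ξ ≠ 1, m ≥ 2, and let c be any fixed unit-norm complex number. If f is chosen uniformly at random from {0,1,…,m−1}, then the probability that ξ^f · c is π/4-strong is at least 1/4. -/

import Mathlib

open scoped Classical

/-- Let `ξ ≠ 1` be an `m`-th root of unity, `m ≥ 2`, and `c` any fixed unit-norm complex
number.  If `f` is uniform on `{0,…,m−1}`, then `ξ^f·c` is `π/4`-strong
(`|arg(ξ^f·c)| ≥ π/4`) with probability at least `1/4`. -/
theorem root_shift_strong (m : ℕ) (hm : 2 ≤ m) (ξ c : ℂ)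
    (hξ : ξ ^ m = 1) (hξ1 : ξ ≠ 1) (hc : ‖c‖ = 1) :
    (1 : ℝ) / 4 ≤
      (((Finset.range m).filter fun f => Real.pi / 4 ≤ |Complex.arg (ξ ^ f * c)|).card : ℝ)
        / m := by
  have hm0 : (0:ℝ) < m := by
    have : 0 < m := lt_of_lt_of_le (by norm_num) hm
    exact_mod_cast this
  -- |ξ| = 1
  have habsξ : ‖ξ‖ = 1 := by
    have h1 : ‖ξ‖ ^ m = 1 := by rw [← norm_pow, hξ, norm_one]
    rcases lt_trichotomy ‖ξ‖ 1 with h | h | h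
    · exfalso
      have := pow_lt_one₀ (norm_nonneg _) h (by omega : m ≠ 0)
      linarith
    · exact h
    · exfalso
      have := one_lt_pow₀ h (by omega : m ≠ 0)
      linarith
  have habs : ∀ f : ℕ, ‖ξ ^ f * c‖ = 1 := by
    intro f
    rw [norm_mul, norm_pow, habsξ, hc, one_pow, one_mul]
  -- sum of points is zero
  have hsum : ∑ f ∈ Finset.range m, (ξ ^ f * c) = 0 := by
    rw [← Finset.sum_mul, geom_sum_eq hξ1, hξ, sub_self, zero_div, zero_mul]
  have hre : ∑ f ∈ Finset.range m, (ξ ^ f * c).re = 0 := by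
    rw [← Complex.re_sum, hsum, Complex.zero_re]
  set P : ℕ → Prop := fun f => Real.pi / 4 ≤ |Complex.arg (ξ ^ f * c)| with hP
  set S := (Finset.range m).filter P with hSdef
  set W := (Finset.range m).filter (fun f => ¬ P f) with hWdef
  -- strong points: re ≥ -1
  have hSre : ∀ f ∈ S, (-1 : ℝ) ≤ (ξ ^ f * c).re := by
    intro f _
    have h1 := Complex.abs_re_le_norm (ξ ^ f * c)
    rw [habs f] at h1
    linarith [abs_le.mp h1]
  -- weak points: re ≥ 1/2
  have hWre : ∀ f ∈ W, (1/2 : ℝ) ≤ (ξ ^ f * c).re := by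
    intro f hf
    have hfw : ¬ P f := (Finset.mem_filter.mp hf).2
    have harg : |Complex.arg (ξ ^ f * c)| < Real.pi / 4 := not_le.mp hfw
    have hz : (ξ ^ f * c) ≠ 0 := by
      intro h
      have h1 := habs f
      rw [h] at h1
      simp at h1
    have hcos : Real.cos (Complex.arg (ξ ^ f * c)) = (ξ ^ f * c).re := by
      rw [Complex.cos_arg hz, habs f, div_one]
    have hcosabs : Real.cos |Complex.arg (ξ ^ f * c)| = (ξ ^ f * c).re := by
      rw [Real.cos_abs, hcos]
    have hlt : Real.cos (Real.pi / 4) < Real.cos |Complex.arg (ξ ^ f * c)| := by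
      apply Real.cos_lt_cos_of_nonneg_of_le_pi (abs_nonneg _)
      · linarith [Real.pi_pos]
      · exact harg
    rw [Real.cos_pi_div_four, hcosabs] at hlt
    have h2 : (1:ℝ) < Real.sqrt 2 := by
      nlinarith [Real.sq_sqrt (by norm_num : (2:ℝ) ≥ 0), Real.sqrt_nonneg 2]
    linarith
  -- sum bounds
  have hsplit : (∑ f ∈ S, (ξ ^ f * c).re) + (∑ f ∈ W, (ξ ^ f * c).re) = 0 := by
    rw [hSdef, hWdef, Finset.sum_filter_add_sum_filter_not, hre]
  have hSbound : -(S.card : ℝ) ≤ ∑ f ∈ S, (ξ ^ f * c).re := by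
    calc -(S.card : ℝ) = ∑ _f ∈ S, (-1 : ℝ) := by simp
    _ ≤ _ := Finset.sum_le_sum hSre
  have hWbound : (W.card : ℝ) * (1/2) ≤ ∑ f ∈ W, (ξ ^ f * c).re := by
    calc (W.card : ℝ) * (1/2) = ∑ _f ∈ W, (1/2 : ℝ) := by simp [mul_comm]
    _ ≤ _ := Finset.sum_le_sum hWre
  have hcards : (S.card : ℝ) + W.card = m := by
    have := Finset.card_filter_add_card_filter_not (s := Finset.range m) (p := P)
    rw [Finset.card_range] at this
    exact_mod_cast this
  have hW2S : (W.card : ℝ) ≤ 2 * S.card := by linarith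
  rw [le_div_iff₀ hm0]
  linarith
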